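/- The map sending a class [(a,b)] ∈ HQ(A,σ,Eˣ) to the cohomology class [a] ∈ H²(A,Eˣ) restricts to a group isomorphism from the kernel of the trace-of-Frobenius homomorphism Tr : HQ(A,σ,Eˣ) → Hom(A^σ, Eˣ) onto H²(A,Eˣ)^σ. (This computes the kernel of the trace of Frobenius for quasicharacter sheaves on étale commutative group schemes, as in Proposition 3.7 and Theorem 3.9 of the paper, in the stalk/cocycle model.) -/

import Mathlib

noncomputable def unitsRootableNat (E : Type) [Field E] [IsAlgClosed E] : RootableBy Eˣ ℕ :=
  rootableByOfPowLeftSurj _ _ (by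
    intro n hn u
    obtain ⟨z, hz⟩ := IsAlgClosed.exists_pow_nat_eq (u : E) (Nat.pos_of_ne_zero hn)
    have hz0 : z ≠ 0 := by
      rintro rfl
      rw [zero_pow hn] at hz
      exact (Units.ne_zero u) hz.symm
    refine ⟨Units.mk0 z hz0, ?_⟩
    ext
    simpa using hz)

noncomputable def unitsDivisible (E : Type) [Field E] [IsAlgClosed E] :
    DivisibleBy (Additive Eˣ) ℤ :=
  letI : RootableBy Eˣ ℕ := unitsRootableNat E
  letI : RootableBy Eˣ ℤ := Group.rootableByIntOfRootableByNat Eˣ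
  { div := fun a n => Additive.ofMul (RootableBy.root a.toMul n)
    div_zero := fun a => congrArg Additive.ofMul (RootableBy.root_zero _)
    div_cancel := fun {n} a hn => by
      have h : (RootableBy.root a.toMul n) ^ n = a.toMul := RootableBy.root_cancel _ hn
      have := congrArg Additive.ofMul h
      rw [ofMul_zpow] at this
      simpa using this }

/-- Extension of multiplicative characters from a subgroup, raw form. -/
lemma extension_raw (E : Type) [Field E] [IsAlgClosed E]
    {A : Type} [AddCommGroup A] (H : AddSubgroup A) (f : A → Eˣ)
    (hf : ∀ x ∈ H, ∀ y ∈ H, f (x + y) = f x * f y) :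
    ∃ g : A → Eˣ, (∀ x y, g (x + y) = g x * g y) ∧ ∀ x ∈ H, g x = f x := by
  letI := unitsDivisible E
  have hbaer : Module.Baer ℤ (Additive Eˣ) := Module.Baer.of_divisible _
  have hf0 : f 0 = 1 := by
    have h := hf 0 H.zero_mem 0 H.zero_mem
    rw [add_zero] at h
    have := mul_right_cancel (a := f 0) (b := f 0) (c := 1) (by simpa using h.symm)
    exact this
  let f₀ : H →+ Additive Eˣ :=
    { toFun := fun x => Additive.ofMul (f (x : A))
      map_zero' := by simpa using congrArg Additive.ofMul hf0
      map_add' := by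
        rintro ⟨x, hx⟩ ⟨y, hy⟩
        exact congrArg Additive.ofMul (hf x hx y hy) }
  obtain ⟨g₀, hg₀⟩ := hbaer.extension_property_addMonoidHom H.subtype
    Subtype.coe_injective f₀
  refine ⟨fun x => (g₀ x).toMul, ?_, ?_⟩
  · intro x y
    exact congrArg Additive.toMul (map_add g₀ x y)
  · intro x hx
    have := DFunLike.congr_fun hg₀ ⟨x, hx⟩
    exact congrArg Additive.toMul this



/-! Basic setup: cocycle description of quasicharacter sheaves on étale
commutative group schemes, following the paper's stalk description. -/

section QCS

variable (A : Type) [AddCommGroup A] (M : Type) [CommGroup M]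

/-- The 2-cocycle condition for a function `a : A × A → M` (trivial action). -/
def IsCocycle (a : A → A → M) : Prop :=
  ∀ x y z : A, a (x + y) z * a x y = a x (y + z) * a y z

/-- The coboundary of a function `d : A → M`. -/
def cobound (d : A → M) : A → A → M :=
  fun x y => d (x + y) * (d x)⁻¹ * (d y)⁻¹

/-- The group of 2-cocycles `Z²(A,M)`. -/
def Z2 : Subgroup (A → A → M) where
  carrier := {a | IsCocycle A M a}
  one_mem' := by intro x y z; simp
  mul_mem' := by
    intro a b ha hb
    intro x y z
    simp only [Pi.mul_apply]
    rw [mul_mul_mul_comm, ha x y z, hb x y z, mul_mul_mul_comm]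
  inv_mem' := by
    intro a ha
    intro x y z
    simp only [Pi.inv_apply]
    rw [← mul_inv, ← mul_inv, ha x y z]

lemma mem_Z2_iff {a : A → A → M} : a ∈ Z2 A M ↔ IsCocycle A M a := Iff.rfl

/-- The coboundary map, as a homomorphism. -/
def coboundHom : (A → M) →* (A → A → M) where
  toFun := cobound A M
  map_one' := by funext x y; simp [cobound]
  map_mul' := by
    intro d e
    funext x y
    simp only [cobound, Pi.mul_apply, mul_inv]
    simp [mul_comm, mul_left_comm, mul_assoc]

/-- The group of 2-coboundaries `B²(A,M)`. -/
def B2 : Subgroup (A → A → M) := (coboundHom A M).range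

/-- The second cohomology group `H²(A,M)` (trivial action). -/
abbrev H2 : Type := Z2 A M ⧸ (B2 A M).subgroupOf (Z2 A M)

variable (σ : A ≃+ A)

/-- The compatibility condition between a 2-cocycle `a` and a 1-cochain `b`
relative to the automorphism `σ`. -/
def IsCompat (a : A → A → M) (b : A → M) : Prop :=
  ∀ x y : A, a (σ x) (σ y) * (a x y)⁻¹ = b (x + y) * (b x)⁻¹ * (b y)⁻¹

/-- The group `ZQ(A,σ,M)` of quasicharacter data. -/
def ZQ : Subgroup ((A → A → M) × (A → M)) where
  carrier := {p | IsCocycle A M p.1 ∧ IsCompat A M σ p.1 p.2}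
  one_mem' := ⟨fun x y z => by simp, fun x y => by simp⟩
  mul_mem' := by
    rintro p q ⟨hp1, hp2⟩ ⟨hq1, hq2⟩
    refine ⟨mul_mem (show p.1 ∈ Z2 A M from hp1) (show q.1 ∈ Z2 A M from hq1), ?_⟩
    intro x y
    have key : (p.1 (σ x) (σ y) * (p.1 x y)⁻¹) * (q.1 (σ x) (σ y) * (q.1 x y)⁻¹)
        = (p.2 (x + y) * (p.2 x)⁻¹ * (p.2 y)⁻¹) * (q.2 (x + y) * (q.2 x)⁻¹ * (q.2 y)⁻¹) := by
      rw [hp2 x y, hq2 x y]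
    simpa [Prod.fst_mul, Prod.snd_mul, Pi.mul_apply, mul_inv, mul_comm, mul_left_comm,
      mul_assoc] using key
  inv_mem' := by
    rintro p ⟨hp1, hp2⟩
    refine ⟨inv_mem (show p.1 ∈ Z2 A M from hp1), ?_⟩
    intro x y
    have key := congrArg (·⁻¹) (hp2 x y)
    simpa [Prod.fst_inv, Prod.snd_inv, Pi.inv_apply, mul_inv, mul_comm, mul_left_comm,
      mul_assoc] using key

lemma mem_ZQ_iff {p : (A → A → M) × (A → M)} :
    p ∈ ZQ A M σ ↔ IsCocycle A M p.1 ∧ IsCompat A M σ p.1 p.2 := Iff.rfl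

/-- The map `d ↦ (x ↦ d(σ x)·d(x)⁻¹)`, as a homomorphism. -/
def sigmaDiff : (A → M) →* (A → M) where
  toFun d := fun x => d (σ x) * (d x)⁻¹
  map_one' := by funext x; simp
  map_mul' := by
    intro d e
    funext x
    simp only [Pi.mul_apply, mul_inv]
    simp [mul_comm, mul_left_comm, mul_assoc]

/-- The subgroup `BQ(A,σ,M)` of coboundary quasicharacter data. -/
def BQ : Subgroup ((A → A → M) × (A → M)) :=
  ((coboundHom A M).prod (sigmaDiff A M σ)).range

/-- `HQ(A,σ,M)`: the group of quasicharacter data modulo coboundaries. -/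
abbrev HQ : Type := ZQ A M σ ⧸ (BQ A M σ).subgroupOf (ZQ A M σ)

/-- The subgroup `A^σ` of fixed points of `σ`. -/
def fixedAdd : AddSubgroup A where
  carrier := {x | σ x = x}
  zero_mem' := by simp
  add_mem' := by
    intro a b ha hb
    simp only [Set.mem_setOf_eq] at *
    rw [map_add, ha, hb]
  neg_mem' := by
    intro a ha
    simp only [Set.mem_setOf_eq] at *
    rw [map_neg, ha]

/-- The restriction of the 1-cochain part of a quasicharacter datum to `A^σ`,
as a character of `A^σ`. -/
def trZ (p : ZQ A M σ) : AddChar (fixedAdd A σ) M where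
  toFun := fun x => (p : (A → A → M) × (A → M)).2 (x : A)
  map_zero_eq_one' := by
    have h := p.prop.2 (0 : A) 0
    simp at h
    simpa using h
  map_add_eq_mul' := by
    rintro ⟨x, hx⟩ ⟨y, hy⟩
    have hx' : σ x = x := hx
    have hy' : σ y = y := hy
    have h := p.prop.2 x y
    rw [hx', hy', mul_inv_cancel] at h
    have h2 : (p : (A → A → M) × (A → M)).2 (x + y)
        * ((p : (A → A → M) × (A → M)).2 x)⁻¹
        * ((p : (A → A → M) × (A → M)).2 y)⁻¹ = 1 := h.symm
    rw [mul_inv_eq_one] at h2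
    rw [mul_inv_eq_iff_eq_mul] at h2
    simpa [mul_comm] using h2

/-- The trace map `ZQ(A,σ,M) → Hom(A^σ, M)`, `(a,b) ↦ b|_{A^σ}`. -/
def trZHom : ZQ A M σ →* AddChar (fixedAdd A σ) M where
  toFun := trZ A M σ
  map_one' := by
    apply AddChar.ext
    intro x
    rfl
  map_mul' := by
    intro p q
    apply AddChar.ext
    intro x
    rfl

lemma trZHom_trivial_on_BQ :
    (BQ A M σ).subgroupOf (ZQ A M σ) ≤ (trZHom A M σ).ker := by
  rintro ⟨p, hpZ⟩ hpB
  obtain ⟨d, hd⟩ := hpB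
  have hd' : ((coboundHom A M).prod (sigmaDiff A M σ)) d = p := hd
  have hd2 : p.2 = fun x => d (σ x) * (d x)⁻¹ := by rw [← hd']; rfl
  apply AddChar.ext
  rintro ⟨x, hx⟩
  have hx' : σ x = x := hx
  show trZ A M σ ⟨p, hpZ⟩ _ = 1
  simp [trZ, hd2, hx']

/-- The trace-of-Frobenius homomorphism `Tr : HQ(A,σ,M) → Hom(A^σ,M)`. -/
def TrHom : HQ A M σ →* AddChar (fixedAdd A σ) M :=
  QuotientGroup.lift _ (trZHom A M σ) (trZHom_trivial_on_BQ A M σ)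

/-- The projection `ZQ(A,σ,M) → Z²(A,M)`, `(a,b) ↦ a`. -/
def zproj : ZQ A M σ →* Z2 A M where
  toFun := fun p => ⟨(p : (A → A → M) × (A → M)).1, p.prop.1⟩
  map_one' := rfl
  map_mul' := fun _ _ => rfl

lemma zproj_trivial_on_BQ :
    (BQ A M σ).subgroupOf (ZQ A M σ) ≤
      ((QuotientGroup.mk' ((B2 A M).subgroupOf (Z2 A M))).comp (zproj A M σ)).ker := by
  rintro ⟨p, hpZ⟩ hpB
  obtain ⟨d, hd⟩ := hpB
  have hd' : ((coboundHom A M).prod (sigmaDiff A M σ)) d = p := hd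
  have hd1 : p.1 = cobound A M d := by rw [← hd']; rfl
  simp only [MonoidHom.mem_ker, MonoidHom.comp_apply]
  rw [QuotientGroup.mk'_apply, QuotientGroup.eq_one_iff]
  show (zproj A M σ ⟨p, hpZ⟩ : A → A → M) ∈ B2 A M
  exact ⟨d, hd1.symm⟩

/-- The map `HQ(A,σ,M) → H²(A,M)` sending `[(a,b)]` to `[a]`. -/
def clsHom : HQ A M σ →* H2 A M :=
  QuotientGroup.lift _ ((QuotientGroup.mk' ((B2 A M).subgroupOf (Z2 A M))).comp (zproj A M σ))
    (zproj_trivial_on_BQ A M σ)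

/-- Precomposition with `σ × σ` on 2-cocycles. -/
def precompZ2 : Z2 A M →* Z2 A M where
  toFun := fun a => ⟨fun x y => (a : A → A → M) (σ x) (σ y), by
    intro x y z
    have := a.prop (σ x) (σ y) (σ z)
    simpa [map_add] using this⟩
  map_one' := rfl
  map_mul' := fun _ _ => rfl

lemma precompZ2_trivial : ((B2 A M).subgroupOf (Z2 A M)) ≤
    (((QuotientGroup.mk' ((B2 A M).subgroupOf (Z2 A M))).comp (precompZ2 A M σ))).ker := by
  rintro ⟨a, haZ⟩ haB
  obtain ⟨d, hd⟩ := haB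
  simp only [MonoidHom.mem_ker, MonoidHom.comp_apply]
  rw [QuotientGroup.mk'_apply, QuotientGroup.eq_one_iff]
  show (precompZ2 A M σ ⟨a, haZ⟩ : A → A → M) ∈ B2 A M
  refine ⟨fun x => d (σ x), ?_⟩
  have hd1 : a = cobound A M d := hd.symm
  funext x y
  show cobound A M (fun x => d (σ x)) x y = a (σ x) (σ y)
  rw [hd1]
  simp [cobound, map_add]

/-- The action of `σ` on `H²(A,M)`, `[a] ↦ [a ∘ (σ × σ)]`. -/
def H2act : H2 A M →* H2 A M :=
  QuotientGroup.lift _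
    ((QuotientGroup.mk' ((B2 A M).subgroupOf (Z2 A M))).comp (precompZ2 A M σ))
    (precompZ2_trivial A M σ)

/-- The subgroup `H²(A,M)^σ` of `σ`-fixed classes. -/
def H2fixed : Subgroup (H2 A M) where
  carrier := {c | H2act A M σ c = c}
  one_mem' := map_one _
  mul_mem' := by
    intro a b ha hb
    simp only [Set.mem_setOf_eq] at *
    rw [map_mul, ha, hb]
  inv_mem' := by
    intro a ha
    simp only [Set.mem_setOf_eq] at *
    rw [map_inv, ha]

end QCS

section Helpers

variable (A : Type) [AddCommGroup A] (M : Type) [CommGroup M] (σ : A ≃+ A)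

lemma clsHom_mk (p : ZQ A M σ) :
    clsHom A M σ (QuotientGroup.mk p) = QuotientGroup.mk (zproj A M σ p) := rfl

lemma TrHom_mk (p : ZQ A M σ) :
    TrHom A M σ (QuotientGroup.mk p) = trZHom A M σ p := rfl

lemma H2act_mk (q : Z2 A M) :
    H2act A M σ (QuotientGroup.mk q) = QuotientGroup.mk (precompZ2 A M σ q) := rfl

lemma clsHom_mem_fixed (c : HQ A M σ) : clsHom A M σ c ∈ H2fixed A M σ := by
  induction c using QuotientGroup.induction_on with
  | H p =>
    rw [clsHom_mk]
    show H2act A M σ _ = _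
    rw [H2act_mk]
    rw [QuotientGroup.eq]
    rw [Subgroup.mem_subgroupOf]
    refine ⟨fun x => ((p : (A → A → M) × (A → M)).2 x)⁻¹, ?_⟩
    have hcompat := p.prop.2
    funext x y
    have h := hcompat x y
    have h' := congrArg (·⁻¹) h
    simp only [mul_inv, inv_inv] at h'
    show cobound A M (fun x => ((p : (A → A → M) × (A → M)).2 x)⁻¹) x y =
      ((((precompZ2 A M σ) ((zproj A M σ) p))⁻¹ * (zproj A M σ) p : Z2 A M) : A → A → M) x y
    simp only [Subgroup.coe_mul, InvMemClass.coe_inv, Pi.mul_apply, Pi.inv_apply, cobound]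
    show _ = ((p : (A → A → M) × (A → M)).1 (σ x) (σ y))⁻¹ *
      (p : (A → A → M) × (A → M)).1 x y
    simp only [inv_inv]
    exact h'.symm

end Helpers

section AuxE

variable (E : Type) [Field E] [IsAlgClosed E]
variable (A : Type) [AddCommGroup A] (σ : A ≃+ A)

lemma inj_aux (p : ZQ A Eˣ σ)
    (hbfix : ∀ x : A, σ x = x → (p : (A → A → Eˣ) × (A → Eˣ)).2 x = 1)
    (d : A → Eˣ)
    (hd' : (p : (A → A → Eˣ) × (A → Eˣ)).1 = cobound A Eˣ d) :
    (p : (A → A → Eˣ) × (A → Eˣ)) ∈ BQ A Eˣ σ := by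
  classical
  set a := (p : (A → A → Eˣ) × (A → Eˣ)).1 with ha
  set b := (p : (A → A → Eˣ) × (A → Eˣ)).2 with hbdef
  set b' : A → Eˣ := fun x => b x * (d (σ x) * (d x)⁻¹)⁻¹ with hb'
  have hcompat : IsCompat A Eˣ σ a b := p.prop.2
  have key : ∀ x y, b (x + y) * (b x)⁻¹ * (b y)⁻¹
      = (d (σ (x + y)) * (d (x + y))⁻¹) * (d (σ x) * (d x)⁻¹)⁻¹ * (d (σ y) * (d y)⁻¹)⁻¹ := by
    intro x y
    have h := hcompat x y
    rw [hd'] at h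
    rw [← h]
    simp [cobound, map_add, mul_inv, mul_comm, mul_left_comm, mul_assoc]
  have hb'fix : ∀ x : A, σ x = x → b' x = 1 := by
    intro x hx
    simp [hb', hx, hbfix x hx]
  have hb'hom : ∀ x y, b' (x + y) = b' x * b' y := by
    intro x y
    have e1 : b' (x + y) * ((b' y * b' x)⁻¹)
        = (b (x + y) * (b x)⁻¹ * (b y)⁻¹) *
          ((d (σ (x + y)) * (d (x + y))⁻¹) * (d (σ x) * (d x)⁻¹)⁻¹
            * (d (σ y) * (d y)⁻¹)⁻¹)⁻¹ := by
      simp [hb', mul_inv, inv_inv, mul_comm, mul_left_comm, mul_assoc]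
    rw [key x y, mul_inv_cancel, mul_inv_eq_one] at e1
    rw [e1, mul_comm]
  set ψ : A →+ A :=
    { toFun := fun x => σ x - x
      map_zero' := by simp
      map_add' := by intro x y; simp only [map_add]; abel } with hψ
  have hψap : ∀ x, ψ x = σ x - x := fun _ => rfl
  have hψker : ∀ w : A, ψ w = 0 → σ w = w := by
    intro w hw
    rw [hψap, sub_eq_zero] at hw
    exact hw
  have hwd : ∀ x y : A, ψ x = ψ y → b' x = b' y := by
    intro x y hxy
    have hfix : σ (x - y) = x - y := by
      refine hψker _ ?_
      rw [map_sub, hxy, sub_self]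
    have h1 : b' (x - y + y) = b' (x - y) * b' y := hb'hom _ _
    rw [sub_add_cancel] at h1
    rw [h1, hb'fix _ hfix, one_mul]
  set f : A → Eˣ := fun r => if h : r ∈ ψ.range then b' h.choose else 1 with hf
  have hfval : ∀ x : A, f (ψ x) = b' x := by
    intro x
    have hmem : ψ x ∈ ψ.range := ⟨x, rfl⟩
    rw [hf]
    simp only
    rw [dif_pos hmem]
    exact hwd _ _ hmem.choose_spec
  have hfhom : ∀ r ∈ ψ.range, ∀ s ∈ ψ.range, f (r + s) = f r * f s := by
    rintro r ⟨x, rfl⟩ s ⟨y, rfl⟩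
    rw [← map_add, hfval, hfval, hfval, hb'hom]
  obtain ⟨g, hghom, hgext⟩ := extension_raw E ψ.range f hfhom
  have hgψ : ∀ x, g (σ x) * (g x)⁻¹ = b' x := by
    intro x
    have h1 : g (ψ x + x) = g (ψ x) * g x := hghom _ _
    have h2 : ψ x + x = σ x := by rw [hψap, sub_add_cancel]
    rw [h2] at h1
    rw [h1, hgext _ ⟨x, rfl⟩, hfval, mul_inv_cancel_right]
  refine ⟨fun x => d x * g x, ?_⟩
  have h1 : coboundHom A Eˣ (fun x => d x * g x) = a := by
    rw [hd']
    funext x y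
    show cobound A Eˣ (fun x => d x * g x) x y = cobound A Eˣ d x y
    simp only [cobound, hghom, mul_inv, inv_inv]
    rw [Units.ext_iff]
    push_cast
    field_simp
  have h2 : sigmaDiff A Eˣ σ (fun x => d x * g x) = b := by
    funext x
    show (d (σ x) * g (σ x)) * (d x * g x)⁻¹ = b x
    have hbx : b x = b' x * (d (σ x) * (d x)⁻¹) := by
      rw [hb']
      simp [mul_assoc]
    rw [hbx, ← hgψ x]
    simp [mul_inv, mul_comm, mul_left_comm, mul_assoc]
  exact Prod.ext h1 h2

lemma surj_aux (q : Z2 A Eˣ) (d : A → Eˣ)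
    (hd : ∀ x y, (q : A → A → Eˣ) (σ x) (σ y) * ((q : A → A → Eˣ) x y)⁻¹
      = cobound A Eˣ d x y) :
    ∃ p : ZQ A Eˣ σ, (p : (A → A → Eˣ) × (A → Eˣ)).1 = (q : A → A → Eˣ) ∧
      trZHom A Eˣ σ p = 1 := by
  classical
  have hdhom : ∀ x ∈ fixedAdd A σ, ∀ y ∈ fixedAdd A σ, d (x + y) = d x * d y := by
    intro x hx y hy
    have hx' : σ x = x := hx
    have hy' : σ y = y := hy
    have h := hd x y
    rw [hx', hy', mul_inv_cancel] at h
    have h2 := h.symm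
    simp only [cobound] at h2
    rw [mul_assoc, ← mul_inv, mul_inv_eq_one] at h2
    rw [h2, mul_comm]
  obtain ⟨χ, hχhom, hχext⟩ := extension_raw E (fixedAdd A σ) d hdhom
  set b : A → Eˣ := fun x => d x * (χ x)⁻¹ with hb
  have hcompat : IsCompat A Eˣ σ (q : A → A → Eˣ) b := by
    intro x y
    rw [hd x y]
    simp only [cobound, hb, hχhom, mul_inv, inv_inv]
    rw [Units.ext_iff]
    push_cast
    field_simp
  refine ⟨⟨((q : A → A → Eˣ), b), ⟨q.prop, hcompat⟩⟩, rfl, ?_⟩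
  apply AddChar.ext
  rintro ⟨x, hx⟩
  show trZ A Eˣ σ _ _ = _
  simp only [trZ, AddChar.coe_mk]
  show b x = (1 : AddChar (fixedAdd A σ) Eˣ) ⟨x, hx⟩
  rw [hb]
  simp [hχext x hx]

end AuxE

/-- The map `[(a,b)] ↦ [a]` restricts to a group isomorphism from the
kernel of the trace-of-Frobenius homomorphism `Tr : HQ(A,σ,Eˣ) → Hom(A^σ, Eˣ)` onto
`H²(A,Eˣ)^σ`. -/
theorem kernel_of_trace_iso_fixed_H2
    (E : Type) [Field E] [IsAlgClosed E] [CharZero E]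
    (A : Type) [AddCommGroup A] (σ : A ≃+ A) :
    ∃ e : (TrHom A Eˣ σ).ker ≃* H2fixed A Eˣ σ,
      ∀ (c : HQ A Eˣ σ) (hc : c ∈ (TrHom A Eˣ σ).ker),
        ((e ⟨c, hc⟩ : H2fixed A Eˣ σ) : H2 A Eˣ) = clsHom A Eˣ σ c := by
  classical
  set φ0 := (clsHom A Eˣ σ).comp ((TrHom A Eˣ σ).ker.subtype) with hφ0
  have hmem : ∀ c : (TrHom A Eˣ σ).ker, φ0 c ∈ H2fixed A Eˣ σ := fun c =>
    clsHom_mem_fixed A Eˣ σ _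
  set φ := φ0.codRestrict (H2fixed A Eˣ σ) hmem with hφ
  have hinj : Function.Injective φ := by
    rw [injective_iff_map_eq_one]
    rintro ⟨c, hc⟩ h1
    obtain ⟨p, rfl⟩ := QuotientGroup.mk_surjective c
    have h1' : clsHom A Eˣ σ (QuotientGroup.mk p) = 1 := congrArg Subtype.val h1
    rw [clsHom_mk] at h1'
    have hB := (Subgroup.mem_subgroupOf).mp ((QuotientGroup.eq_one_iff _).mp h1')
    obtain ⟨d, hdd⟩ := hB
    have hker : trZHom A Eˣ σ p = 1 := by rwa [MonoidHom.mem_ker, TrHom_mk] at hc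
    have hbfix : ∀ x : A, σ x = x → (p : (A → A → Eˣ) × (A → Eˣ)).2 x = 1 := by
      intro x hx
      have := DFunLike.congr_fun hker ⟨x, hx⟩
      simpa [trZHom, trZ] using this
    have hd' : (p : (A → A → Eˣ) × (A → Eˣ)).1 = cobound A Eˣ d := hdd.symm
    have hmemBQ := inj_aux E A σ p hbfix d hd'
    apply Subtype.ext
    exact (QuotientGroup.eq_one_iff _).mpr (Subgroup.mem_subgroupOf.mpr hmemBQ)
  have hsurj : Function.Surjective φ := by
    rintro ⟨h, hh⟩
    obtain ⟨q, rfl⟩ := QuotientGroup.mk_surjective h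
    have hfix : H2act A Eˣ σ (QuotientGroup.mk q) = QuotientGroup.mk q := hh
    rw [H2act_mk] at hfix
    obtain ⟨d₀, hd₀⟩ := (Subgroup.mem_subgroupOf).mp ((QuotientGroup.eq).mp hfix)
    have hd : ∀ x y, (q : A → A → Eˣ) (σ x) (σ y) * ((q : A → A → Eˣ) x y)⁻¹
        = cobound A Eˣ (fun x => (d₀ x)⁻¹) x y := by
      intro x y
      have h1 := congrFun (congrFun hd₀ x) y
      have h1' : cobound A Eˣ d₀ x y
          = ((q : A → A → Eˣ) (σ x) (σ y))⁻¹ * (q : A → A → Eˣ) x y := by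
        have h1'' : coboundHom A Eˣ d₀ x y
            = ((q : A → A → Eˣ) (σ x) (σ y))⁻¹ * (q : A → A → Eˣ) x y := by
          simpa [Subgroup.coe_mul, InvMemClass.coe_inv, Pi.mul_apply, Pi.inv_apply,
            precompZ2] using h1
        exact h1''
      have h2 : cobound A Eˣ (fun x => (d₀ x)⁻¹) x y = (cobound A Eˣ d₀ x y)⁻¹ := by
        simp [cobound, mul_inv, mul_comm, mul_left_comm, mul_assoc]
      rw [h2, h1']
      simp [mul_inv, inv_inv, mul_comm]
    obtain ⟨p, hp1, hp2⟩ := surj_aux E A σ q _ hd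
    refine ⟨⟨QuotientGroup.mk p, ?_⟩, ?_⟩
    · rw [MonoidHom.mem_ker, TrHom_mk, hp2]
    · apply Subtype.ext
      show clsHom A Eˣ σ (QuotientGroup.mk p) = QuotientGroup.mk q
      rw [clsHom_mk]
      exact congrArg QuotientGroup.mk (Subtype.ext hp1)
  exact ⟨MulEquiv.ofBijective φ ⟨hinj, hsurj⟩, fun c hc => rfl⟩
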